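/- For the drifting split-step backward Milstein (DSSBM) method applied to the test system with F = λI₂, G₁ = diag(ε,−ε), G₂ = antidiag(σ,σ), the zero solution of the discrete scheme is asymptotically mean-square stable if and only if 1 − 2(1−x)² + (y² + z² + 1)² < 0, where x = hλ, y² = hε², z² = hσ². -/

import Mathlib

open Kronecker Matrix

set_option maxHeartbeats 1600000 in
private def dssbmE4 : Fin 4 ≃ Fin 2 × Fin 2 where
  toFun := ![(0,0),(0,1),(1,0),(1,1)]
  invFun p := ![![0,1],![2,3]] p.1 p.2
  left_inv := by decide
  right_inv := by decide

set_option maxHeartbeats 1600000 in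
private lemma dssbm_spec4 (a b p q : ℝ) (M : Matrix (Fin 2 × Fin 2) (Fin 2 × Fin 2) ℂ)
    (hM : M.submatrix dssbmE4 dssbmE4 =
      !![((a:ℝ):ℂ), 0, 0, ((p:ℝ):ℂ); 0, ((b:ℝ):ℂ), ((q:ℝ):ℂ), 0;
         0, ((q:ℝ):ℂ), ((b:ℝ):ℂ), 0; ((p:ℝ):ℂ), 0, 0, ((a:ℝ):ℂ)]) (μ : ℂ) :
    μ ∈ spectrum ℂ M ↔
      (μ = ((a+p : ℝ):ℂ) ∨ μ = ((a-p:ℝ):ℂ) ∨ μ = ((b+q:ℝ):ℂ) ∨ μ = ((b-q:ℝ):ℂ)) := by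
  rw [spectrum.mem_iff, Matrix.isUnit_iff_isUnit_det, isUnit_iff_ne_zero, not_not,
    ← Matrix.det_submatrix_equiv_self dssbmE4]
  have hsub : (algebraMap ℂ (Matrix (Fin 2 × Fin 2) (Fin 2 × Fin 2) ℂ) μ - M).submatrix
        dssbmE4 dssbmE4
      = μ • (1 : Matrix (Fin 4) (Fin 4) ℂ) - M.submatrix dssbmE4 dssbmE4 := by
    ext i j
    simp [Algebra.algebraMap_eq_smul_one, Matrix.submatrix_apply, Matrix.one_apply,
      Equiv.injective dssbmE4 |>.eq_iff]
  rw [hsub, hM]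
  have hexp : μ • (1 : Matrix (Fin 4) (Fin 4) ℂ) -
      !![((a:ℝ):ℂ), 0, 0, ((p:ℝ):ℂ); 0, ((b:ℝ):ℂ), ((q:ℝ):ℂ), 0;
         0, ((q:ℝ):ℂ), ((b:ℝ):ℂ), 0; ((p:ℝ):ℂ), 0, 0, ((a:ℝ):ℂ)]
      = !![μ - ((a:ℝ):ℂ), 0, 0, -((p:ℝ):ℂ); 0, μ - ((b:ℝ):ℂ), -((q:ℝ):ℂ), 0;
         0, -((q:ℝ):ℂ), μ - ((b:ℝ):ℂ), 0; -((p:ℝ):ℂ), 0, 0, μ - ((a:ℝ):ℂ)] := by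
    ext i j; fin_cases i <;> fin_cases j <;> simp [Matrix.one_apply]
  rw [hexp]
  have hdet : (!![μ - ((a:ℝ):ℂ), 0, 0, -((p:ℝ):ℂ); 0, μ - ((b:ℝ):ℂ), -((q:ℝ):ℂ), 0;
         0, -((q:ℝ):ℂ), μ - ((b:ℝ):ℂ), 0; -((p:ℝ):ℂ), 0, 0, μ - ((a:ℝ):ℂ)]).det
      = (μ - ((a+p : ℝ):ℂ)) * (μ - ((a-p:ℝ):ℂ)) * (μ - ((b+q:ℝ):ℂ)) * (μ - ((b-q:ℝ):ℂ)) := by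
    simp [Matrix.det_succ_row_zero, Fin.sum_univ_succ, Fin.castSucc, Fin.castAdd, Fin.castLE,
      Fin.succ, Fin.succAbove]
    push_cast
    ring
  rw [hdet]
  simp [mul_eq_zero, sub_eq_zero]
  tauto

set_option maxHeartbeats 1600000 in
/-- For the drifting split-step backward Milstein (DSSBM) method applied to the
test system `F = λI₂`, `G₁ = diag(ε,−ε)`, `G₂ = antidiag(σ,σ)`, the zero
solution of the discrete scheme is asymptotically mean-square stable
(`ρ(E[Rₙ⊗Rₙ]) < 1`) if and only if `1 − 2(1−x)² + (y²+z²+1)² < 0`, where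
`x = hλ`, `y² = hε²`, `z² = hσ²`. Here the mean-square stability matrix is
`S = (I + S_Mil^stoch)(P⊗P)` with `P = (I−hF)⁻¹`. -/
theorem dssbm_ms_stability_iff (lam ε σ h : ℝ) (hh : 0 < h)
    (hinv : h * lam ≠ 1)
    (F G₁ G₂ P : Matrix (Fin 2) (Fin 2) ℝ)
    (hF : F = !![lam, 0; 0, lam]) (hG₁ : G₁ = !![ε, 0; 0, -ε])
    (hG₂ : G₂ = !![(0:ℝ), σ; σ, 0])
    (hP : P = ((1 : Matrix (Fin 2) (Fin 2) ℝ) - h • F)⁻¹)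
    (S : Matrix (Fin 2 × Fin 2) (Fin 2 × Fin 2) ℝ)
    (hS : S = ((1 : Matrix (Fin 2 × Fin 2) (Fin 2 × Fin 2) ℝ)
        + h • (G₁ ⊗ₖ G₁ + G₂ ⊗ₖ G₂)
        + (h ^ 2 / 2) • ((G₁ * G₁) ⊗ₖ (G₁ * G₁) + (G₂ * G₂) ⊗ₖ (G₂ * G₂))
        + (h ^ 2 / 4) • ((G₁ * G₂ + G₂ * G₁) ⊗ₖ (G₁ * G₂ + G₂ * G₁))
        + (h ^ 2 / 4) • ((G₁ * G₂ - G₂ * G₁) ⊗ₖ (G₁ * G₂ - G₂ * G₁)))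
        * (P ⊗ₖ P)) :
    (∀ μ ∈ spectrum ℂ (S.map (Complex.ofReal ·)), ‖μ‖ < 1) ↔
      1 - 2 * (1 - h * lam) ^ 2 + (h * ε ^ 2 + h * σ ^ 2 + 1) ^ 2 < 0 := by
  have hx : (1:ℝ) - h*lam ≠ 0 := sub_ne_zero.mpr (Ne.symm hinv)
  -- P is a scalar matrix
  have hP' : P = (1 - h*lam)⁻¹ • (1 : Matrix (Fin 2) (Fin 2) ℝ) := by
    have h1 : (1 : Matrix (Fin 2) (Fin 2) ℝ) - h • F = (1 - h*lam) • 1 := by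
      subst hF; ext i j; fin_cases i <;> fin_cases j <;>
        simp [Matrix.one_apply, Matrix.smul_apply, Matrix.sub_apply]
    rw [hP, h1]
    apply Matrix.inv_eq_right_inv
    rw [smul_mul_smul_comm, one_mul, mul_inv_cancel₀ hx, one_smul]
  -- the explicit form of S (reindexed to Fin 4)
  have hN : (S.map (Complex.ofReal ·)).submatrix dssbmE4 dssbmE4 =
      !![((((1-h*lam)⁻¹)^2*(1 + h*ε^2 + (h^2*ε^4 + h^2*σ^4)/2) : ℝ) : ℂ), 0, 0,
           ((((1-h*lam)⁻¹)^2*(h*σ^2 + h^2*ε^2*σ^2) : ℝ) : ℂ);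
         0, ((((1-h*lam)⁻¹)^2*(1 - h*ε^2 + (h^2*ε^4 + h^2*σ^4)/2) : ℝ) : ℂ),
           ((((1-h*lam)⁻¹)^2*(h*σ^2 - h^2*ε^2*σ^2) : ℝ) : ℂ), 0;
         0, ((((1-h*lam)⁻¹)^2*(h*σ^2 - h^2*ε^2*σ^2) : ℝ) : ℂ),
           ((((1-h*lam)⁻¹)^2*(1 - h*ε^2 + (h^2*ε^4 + h^2*σ^4)/2) : ℝ) : ℂ), 0;
         ((((1-h*lam)⁻¹)^2*(h*σ^2 + h^2*ε^2*σ^2) : ℝ) : ℂ), 0, 0,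
           ((((1-h*lam)⁻¹)^2*(1 + h*ε^2 + (h^2*ε^4 + h^2*σ^4)/2) : ℝ) : ℂ)] := by
    have h11 : G₁ * G₁ = !![ε^2, 0; 0, ε^2] := by
      subst hG₁; rw [Matrix.mul_fin_two]; ring_nf
    have h22 : G₂ * G₂ = !![σ^2, 0; 0, σ^2] := by
      subst hG₂; rw [Matrix.mul_fin_two]; ring_nf
    have h12 : G₁ * G₂ + G₂ * G₁ = 0 := by
      subst hG₁ hG₂; rw [Matrix.mul_fin_two, Matrix.mul_fin_two]
      ext i j; fin_cases i <;> fin_cases j <;> simp <;> ring_nf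
    have h12' : G₁ * G₂ - G₂ * G₁ = !![0, 2*(ε*σ); -(2*(ε*σ)), 0] := by
      subst hG₁ hG₂; rw [Matrix.mul_fin_two, Matrix.mul_fin_two]
      ext i j; fin_cases i <;> fin_cases j <;> simp <;> ring_nf
    have hPP : P ⊗ₖ P = (((1 - h*lam)⁻¹)^2) •
        (1 : Matrix (Fin 2 × Fin 2) (Fin 2 × Fin 2) ℝ) := by
      rw [hP', Matrix.smul_kronecker, Matrix.kronecker_smul, Matrix.one_kronecker_one,
        smul_smul, sq]
    rw [hS, h11, h22, h12, h12', hPP, Matrix.mul_smul, mul_one]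
    ext i j
    fin_cases i <;> fin_cases j <;>
      simp [dssbmE4, hG₁, hG₂, Matrix.kroneckerMap_apply, Matrix.one_apply, Prod.ext_iff] <;>
      push_cast <;> ring
  -- the spectrum consists of the four explicit eigenvalues
  have hspec := dssbm_spec4 _ _ _ _ _ hN
  -- abbreviations for the real quantities
  set t : ℝ := ((1-h*lam)⁻¹)^2 with ht_def
  set w : ℝ := (1-h*lam)^2 with hw_def
  have hw : 0 < w := by positivity
  have htw : t * w = 1 := by
    rw [ht_def, hw_def, ← mul_pow, inv_mul_cancel₀ hx, one_pow]
  have ht : 0 < t := by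
    rw [ht_def]; positivity
  have key : ∀ v : ℝ, |t * v| < 1 ↔ |v| < w := by
    intro v
    rw [abs_mul, abs_of_pos ht]
    constructor <;> intro hv <;> nlinarith [abs_nonneg v]
  have hY : 0 ≤ h * ε^2 := by positivity
  have hZ : 0 ≤ h * σ^2 := by positivity
  have hYZ : 0 ≤ h^2 * ε^2 * σ^2 := by positivity
  constructor
  · intro H
    have h1 := H _ ((hspec _).mpr (Or.inl rfl))
    rw [Complex.norm_real, Real.norm_eq_abs] at h1
    have h1' : |t * (1 + h*ε^2 + (h^2*ε^4 + h^2*σ^4)/2 + (h*σ^2 + h^2*ε^2*σ^2))| < 1 := by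
      have : t*(1 + h*ε^2 + (h^2*ε^4 + h^2*σ^4)/2) + t*(h*σ^2 + h^2*ε^2*σ^2)
          = t * (1 + h*ε^2 + (h^2*ε^4 + h^2*σ^4)/2 + (h*σ^2 + h^2*ε^2*σ^2)) := by ring
      rwa [this] at h1
    rw [key] at h1'
    have h1'' := (abs_lt.mp h1').2
    nlinarith
  · intro H μ hμ
    have he1 : 1 + h*ε^2 + (h^2*ε^4 + h^2*σ^4)/2 + (h*σ^2 + h^2*ε^2*σ^2) < w := by
      nlinarith
    have he1' : (0:ℝ) ≤ 1 + h*ε^2 + (h^2*ε^4 + h^2*σ^4)/2 + (h*σ^2 + h^2*ε^2*σ^2) := by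
      positivity
    rcases (hspec μ).mp hμ with rfl | rfl | rfl | rfl <;>
      rw [Complex.norm_real, Real.norm_eq_abs] <;>
      [ (have : t*(1 + h*ε^2 + (h^2*ε^4 + h^2*σ^4)/2) + t*(h*σ^2 + h^2*ε^2*σ^2)
            = t * (1 + h*ε^2 + (h^2*ε^4 + h^2*σ^4)/2 + (h*σ^2 + h^2*ε^2*σ^2)) := by ring);
        (have : t*(1 + h*ε^2 + (h^2*ε^4 + h^2*σ^4)/2) - t*(h*σ^2 + h^2*ε^2*σ^2)
            = t * (1 + h*ε^2 + (h^2*ε^4 + h^2*σ^4)/2 - (h*σ^2 + h^2*ε^2*σ^2)) := by ring);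
        (have : t*(1 - h*ε^2 + (h^2*ε^4 + h^2*σ^4)/2) + t*(h*σ^2 - h^2*ε^2*σ^2)
            = t * (1 - h*ε^2 + (h^2*ε^4 + h^2*σ^4)/2 + (h*σ^2 - h^2*ε^2*σ^2)) := by ring);
        (have : t*(1 - h*ε^2 + (h^2*ε^4 + h^2*σ^4)/2) - t*(h*σ^2 - h^2*ε^2*σ^2)
            = t * (1 - h*ε^2 + (h^2*ε^4 + h^2*σ^4)/2 - (h*σ^2 - h^2*ε^2*σ^2)) := by ring)] <;>
      rw [this, key, abs_lt] <;> constructor <;> nlinarith
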